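/- For every d ∈ ℕ there exists a constant C(d) > 0 such that for any N ∈ ℕ there exist m ∈ ℕ with m ≤ C(d)·N·(log N)^{d−1} (where log denotes logarithm and for N = 1 the bound reads m ≤ C(d)) and a vector h = (h_1,…,h_d) ∈ ℤ^d such that the Korobov cubature formula P_m(f,h) := m^{−1} Σ_{ν=1}^m f(2π{νh_1/m}, …, 2π{νh_d/m}) satisfies P_m(f,h) = (2π)^{−d} ∫_{𝕋^d} f(x) dx for all f ∈ 𝒯(Γ(N,d)). -/

import Mathlib

noncomputable section
open scoped BigOperators
open MeasureTheory

/-- The cube `[0, 2π]^d`, representing the torus `𝕋^d`. -/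
def cube (d : ℕ) : Set (Fin d → ℝ) := Set.Icc 0 (fun _ => 2 * Real.pi)

/-- Uniform norm over the torus `𝕋^d = [0, 2π]^d`. -/
def unifNorm {d : ℕ} (f : (Fin d → ℝ) → ℂ) : ℝ :=
  ⨆ x : cube d, ‖f ↑x‖

/-- The exponential `e^{i(k,x)}`. -/
def expFun {d : ℕ} (k : Fin d → ℤ) : (Fin d → ℝ) → ℂ :=
  fun x => Complex.exp (Complex.I * ∑ j, (k j : ℂ) * (x j : ℂ))

/-- `𝒯(Q)`: the space of trigonometric polynomials with frequencies in `Q`. -/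
def trigSpace {d : ℕ} (Q : Finset (Fin d → ℤ)) : Submodule ℂ ((Fin d → ℝ) → ℂ) :=
  Submodule.span ℂ (expFun '' (Q : Set (Fin d → ℤ)))

/-- `R(s) = {k : |k_j| < 2^{s_j}}`. -/
def Rbox {d : ℕ} (s : Fin d → ℕ) : Finset (Fin d → ℤ) :=
  Fintype.piFinset fun j => Finset.Ioo (-(2 ^ (s j) : ℤ)) ((2 : ℤ) ^ (s j))

/-- Best uniform approximation `d(f, 𝒯(Q))_∞`. -/
def distT {d : ℕ} (f : (Fin d → ℝ) → ℂ) (Q : Finset (Fin d → ℤ)) : ℝ :=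
  ⨅ u : trigSpace Q, unifNorm (f - (u : (Fin d → ℝ) → ℂ))

/-- `2π`-periodicity in each variable. -/
def Periodic2Pi {d : ℕ} (f : (Fin d → ℝ) → ℂ) : Prop :=
  ∀ (x : Fin d → ℝ) (j : Fin d), f (x + (2 * Real.pi) • (Pi.single j 1 : Fin d → ℝ)) = f x

/-- The Fibonacci numbers `b_0 = b_1 = 1`, `b_n = b_{n-1} + b_{n-2}`. -/
def fibb : ℕ → ℕ
  | 0 => 1
  | 1 => 1
  | n + 2 => fibb (n + 1) + fibb n

/-- The hyperbolic cross `Γ(N, d)`. -/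
def hyperCross (d N : ℕ) : Finset (Fin d → ℤ) :=
  (Fintype.piFinset fun _ : Fin d => Finset.Icc (-(N : ℤ)) (N : ℤ)).filter
    fun k => (∏ j, max |k j| 1) ≤ (N : ℤ)

/-- The Fibonacci points `y^ν = (2πν/b_n, 2π{ν b_{n-1}/b_n})`. -/
def fibPoint (n ν : ℕ) : Fin 2 → ℝ :=
  ![2 * Real.pi * ν / fibb n, 2 * Real.pi * Int.fract ((↑(ν * fibb (n - 1)) : ℝ) / fibb n)]

/-- The Korobov points `w^ν = (2π{νh_1/m}, …, 2π{νh_d/m})`. -/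
def korNode (m : ℕ) {d : ℕ} (h : Fin d → ℤ) (ν : ℕ) : Fin d → ℝ :=
  fun i => 2 * Real.pi * Int.fract ((ν : ℝ) * (h i : ℝ) / (m : ℝ))

lemma oneDim (k : ℤ) : ∫ t in Set.Icc (0:ℝ) (2*Real.pi), Complex.exp (Complex.I * k * t) =
    if k = 0 then ((2*Real.pi : ℝ) : ℂ) else 0 := by
  rw [integral_Icc_eq_integral_Ioc, ← intervalIntegral.integral_of_le (by positivity)]
  by_cases hk : k = 0
  · simp [hk, mul_comm]
  · rw [if_neg hk, show (fun x:ℝ => Complex.exp (Complex.I * k * x)) = fun x : ℝ => Complex.exp ((Complex.I*k) * x) from rfl]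
    rw [integral_exp_mul_complex (mul_ne_zero Complex.I_ne_zero (by exact_mod_cast hk))]
    have : Complex.exp (Complex.I * k * (2*Real.pi)) = 1 := by
      rw [show Complex.I * (k:ℂ) * (2*Real.pi) = (k:ℂ) * (2*Real.pi*Complex.I) by push_cast; ring]
      exact Complex.exp_int_mul_two_pi_mul_I k
    simp [this]

lemma cube_mem_iff {d : ℕ} (x : Fin d → ℝ) : x ∈ cube d ↔ ∀ j, x j ∈ Set.Icc (0:ℝ) (2*Real.pi) := by
  simp [cube, Set.mem_Icc, Pi.le_def, forall_and]

lemma integral_expFun {d : ℕ} (k : Fin d → ℤ) :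
    ∫ x in cube d, expFun k x = if k = 0 then (((2*Real.pi)^d : ℝ) : ℂ) else 0 := by
  have mcube : MeasurableSet (cube d) := measurableSet_Icc
  have h1 : ∀ x : Fin d → ℝ, (cube d).indicator (expFun k) x
      = ∏ j, (Set.Icc (0:ℝ) (2*Real.pi)).indicator (fun t => Complex.exp (Complex.I * k j * t)) (x j) := by
    intro x
    by_cases hx : x ∈ cube d
    · rw [Set.indicator_of_mem hx]
      have : ∀ j, (Set.Icc (0:ℝ) (2*Real.pi)).indicator (fun t => Complex.exp (Complex.I * k j * t)) (x j)
          = Complex.exp (Complex.I * k j * x j) := fun j =>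
        Set.indicator_of_mem ((cube_mem_iff x).1 hx j) _
      simp_rw [this, expFun, ← Complex.exp_sum, Finset.mul_sum]
      ring_nf
    · rw [Set.indicator_of_notMem hx]
      obtain ⟨j, hj⟩ := not_forall.1 (fun hall => hx ((cube_mem_iff x).2 hall))
      exact (Finset.prod_eq_zero (Finset.mem_univ j) (Set.indicator_of_notMem hj _)).symm
  rw [← integral_indicator mcube]
  simp_rw [h1]
  rw [MeasureTheory.integral_fintype_prod_volume_eq_prod
    (f := fun j => (Set.Icc (0:ℝ) (2*Real.pi)).indicator (fun t => Complex.exp (Complex.I * k j * t)))]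
  have : ∀ j, ∫ t : ℝ, (Set.Icc (0:ℝ) (2*Real.pi)).indicator (fun t => Complex.exp (Complex.I * k j * t)) t
      = if k j = 0 then ((2*Real.pi : ℝ) : ℂ) else 0 := by
    intro j; rw [integral_indicator measurableSet_Icc]; exact oneDim (k j)
  simp_rw [this]
  by_cases hk : k = 0
  · simp [hk]
  · obtain ⟨j, hj⟩ := Function.ne_iff.1 hk
    rw [if_neg hk]
    exact Finset.prod_eq_zero (Finset.mem_univ j) (if_neg (by simpa using hj))

lemma expFun_korNode {d : ℕ} (m : ℕ) (h k : Fin d → ℤ) (ν : ℕ) :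
    expFun k (korNode m h ν) =
      Complex.exp (((∑ j, k j * h j : ℤ) : ℂ) * (ν : ℂ) / (m : ℂ) * (2 * Real.pi * Complex.I)) := by
  unfold expFun korNode
  rw [Complex.exp_eq_exp_iff_exists_int]
  refine ⟨-∑ j, k j * ⌊(ν:ℝ) * h j / m⌋, ?_⟩
  have e1 : ∀ j, ((2 * Real.pi * Int.fract ((ν:ℝ) * h j / m) : ℝ) : ℂ)
      = 2*Real.pi*((ν:ℂ) * (h j : ℂ) / (m:ℂ)) - 2*Real.pi*((⌊(ν:ℝ) * h j / m⌋ : ℤ):ℂ) := by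
    intro j
    rw [← Int.self_sub_floor]
    push_cast
    ring
  simp_rw [e1, mul_sub, Finset.sum_sub_distrib, mul_sub]
  have hS1 : Complex.I * ∑ j, (k j:ℂ) * (2*Real.pi*((ν:ℂ) * (h j:ℂ) / (m:ℂ)))
      = ((∑ j, k j * h j : ℤ):ℂ) * ν / m * (2*Real.pi*Complex.I) := by
    push_cast
    rw [Finset.mul_sum, Finset.sum_mul, Finset.sum_div, Finset.sum_mul]
    exact Finset.sum_congr rfl fun j _ => by ring
  have hS2 : Complex.I * ∑ j, (k j:ℂ) * (2*Real.pi*((⌊(ν:ℝ) * h j / m⌋:ℤ):ℂ))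
      = -(((-∑ j, k j * ⌊(ν:ℝ) * h j / m⌋ : ℤ):ℂ) * (2*Real.pi*Complex.I)) := by
    push_cast
    rw [neg_mul, neg_neg, Finset.sum_mul, Finset.mul_sum]
    exact Finset.sum_congr rfl fun j _ => by ring
  rw [hS1, hS2]
  ring

lemma sum_exp_geom (m : ℕ) (hm : 0 < m) (T : ℤ) :
    ∑ ν ∈ Finset.Icc 1 m, Complex.exp ((T:ℂ) * (ν:ℂ) / (m:ℂ) * (2 * Real.pi * Complex.I))
      = if (m:ℤ) ∣ T then (m:ℂ) else 0 := by
  have hmC : (m:ℂ) ≠ 0 := Nat.cast_ne_zero.mpr hm.ne'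
  set z := Complex.exp ((T:ℂ) / (m:ℂ) * (2 * Real.pi * Complex.I)) with hz
  have hterm : ∀ ν : ℕ, Complex.exp ((T:ℂ) * (ν:ℂ) / (m:ℂ) * (2 * Real.pi * Complex.I)) = z ^ ν := by
    intro ν
    rw [hz, ← Complex.exp_nat_mul]
    ring_nf
  simp_rw [hterm]
  have hzm : z ^ m = 1 := by
    rw [hz, ← Complex.exp_nat_mul, show (m:ℂ) * ((T:ℂ) / (m:ℂ) * (2 * Real.pi * Complex.I))
      = (T:ℂ) * (2 * Real.pi * Complex.I) by field_simp]
    exact_mod_cast Complex.exp_int_mul_two_pi_mul_I T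
  by_cases hdvd : (m:ℤ) ∣ T
  · obtain ⟨c, hc⟩ := hdvd
    have hz1 : z = 1 := by
      rw [hz, show (T:ℂ) / (m:ℂ) * (2 * Real.pi * Complex.I) = (c:ℂ) * (2 * Real.pi * Complex.I) by
        rw [show (T:ℂ) = (m:ℂ) * (c:ℂ) by exact_mod_cast congrArg (Int.cast : ℤ → ℂ) hc]
        field_simp]
      exact_mod_cast Complex.exp_int_mul_two_pi_mul_I c
    rw [if_pos ⟨c, hc⟩]
    simp [hz1, Nat.card_Icc]
  · rw [if_neg hdvd]
    have hz1 : z ≠ 1 := by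
      intro hz1
      obtain ⟨n, hn⟩ := Complex.exp_eq_one_iff.1 (hz ▸ hz1)
      have h2pi : (2 * Real.pi * Complex.I : ℂ) ≠ 0 := by
        simp [Complex.I_ne_zero, Real.pi_ne_zero, Complex.ext_iff, Real.pi_pos.ne']
      have : (T:ℂ) / (m:ℂ) = (n:ℂ) := mul_right_cancel₀ h2pi hn
      have h2 : (T:ℂ) = (n:ℂ) * (m:ℂ) := by field_simp at this; linear_combination this
      have h3 : T = n * m := by exact_mod_cast h2
      exact hdvd ⟨n, by rw [h3]; ring⟩
    rw [show Finset.Icc 1 m = Finset.Ico 1 (m+1) by rfl, Finset.sum_Ico_eq_sum_range]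
    simp_rw [pow_add, pow_one]
    rw [← Finset.mul_sum, geom_sum_eq hz1, Nat.add_sub_cancel, hzm]
    simp

lemma card_step (d N : ℕ) (hN : 1 ≤ N) :
    (hyperCross (d+1) N).card ≤
      ∑ t ∈ Finset.Icc (-(N:ℤ)) (N:ℤ), (hyperCross d (N / (t.natAbs ⊔ 1))).card := by
  rw [Finset.card_eq_sum_card_fiberwise (f := fun k => k (Fin.last d))
    (t := Finset.Icc (-(N:ℤ)) (N:ℤ)) (fun k hk => by
      simp only [Finset.mem_coe, hyperCross, Finset.mem_filter, Fintype.mem_piFinset] at hk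
      exact hk.1 _)]
  refine Finset.sum_le_sum fun t ht => ?_
  refine Finset.card_le_card_of_injOn (fun k => Fin.init k) ?_ ?_
  · intro k hk
    simp only [Finset.mem_coe, Finset.mem_filter, hyperCross, Fintype.mem_piFinset, Finset.mem_Icc] at hk ⊢
    obtain ⟨⟨hbox, hprod⟩, hlast⟩ := hk
    set a : ℤ := max |t| 1 with ha
    have ha1 : 1 ≤ a := le_max_right _ _
    set P : ℤ := ∏ j : Fin d, max |k (Fin.castSucc j)| 1 with hP
    have hPa : P * a ≤ N := by
      rw [hP, ha, ← hlast, ← Fin.prod_univ_castSucc (f := fun j => max |k j| 1)]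
      exact hprod
    have hP1 : (1:ℤ) ≤ P := by
      have : (0:ℤ) < P := Finset.prod_pos fun j _ => by positivity
      omega
    have hPdiv : P ≤ (N:ℤ) / a := Int.le_ediv_iff_mul_le (by omega) |>.2 hPa
    have hcast : (N:ℤ) / a = ((N / (t.natAbs ⊔ 1) : ℕ) : ℤ) := by
      rw [Int.natCast_ediv]
      congr 1
      push_cast [ha]
      rw [Int.abs_eq_natAbs]
    have hjP : ∀ j : Fin d, max |k (Fin.castSucc j)| 1 ≤ P := by
      intro j
      rw [hP, ← Finset.mul_prod_erase _ _ (Finset.mem_univ j)]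
      have h1 : (0:ℤ) < ∏ i ∈ Finset.univ.erase j, max |k (Fin.castSucc i)| 1 :=
        Finset.prod_pos fun i _ => by positivity
      exact le_mul_of_one_le_right (by positivity) (by omega)
    constructor
    · intro j
      have := (hjP j).trans (hPdiv.trans_eq hcast)
      have habs : |k (Fin.castSucc j)| ≤ ((N / (t.natAbs ⊔ 1) : ℕ) : ℤ) :=
        le_trans (le_max_left _ _) this
      have := abs_le.1 habs
      exact ⟨this.1, this.2⟩
    · calc ∏ j : Fin d, max |Fin.init k j| 1 = P := by rw [hP]; rfl
        _ ≤ _ := hPdiv.trans_eq hcast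
  · intro k1 h1 k2 h2 hinit
    simp only [Finset.mem_coe, Finset.mem_filter] at h1 h2
    rw [← Fin.snoc_init_self k1, ← Fin.snoc_init_self k2,
      show Fin.init k1 = Fin.init k2 from hinit, h1.2, h2.2]

lemma sum_div_le (N : ℕ) (hN : 1 ≤ N) :
    ∑ t ∈ Finset.Icc (-(N:ℤ)) (N:ℤ), ((N / (t.natAbs ⊔ 1) : ℕ) : ℝ)
      ≤ 4 * N * (1 + Real.log N) := by
  have hlogN : 0 ≤ Real.log N := Real.log_natCast_nonneg N
  have h2 : ∑ t ∈ Finset.Icc (-(N:ℤ)) (N:ℤ), ((N / (t.natAbs ⊔ 1) : ℕ) : ℝ)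
      ≤ ∑ u ∈ Finset.Icc 0 N, 2 * ((N / (u ⊔ 1) : ℕ) : ℝ) := by
    rw [← Finset.sum_fiberwise_of_maps_to (g := fun t : ℤ => t.natAbs)
      (t := Finset.Icc 0 N) (fun t ht => by
        simp only [Finset.mem_Icc] at ht ⊢; omega)]
    refine Finset.sum_le_sum fun u hu => ?_
    have hsub : (Finset.Icc (-(N:ℤ)) N).filter (fun t => t.natAbs = u) ⊆ {(u:ℤ), -(u:ℤ)} := by
      intro t ht
      simp only [Finset.mem_filter, Finset.mem_Icc] at ht
      simp only [Finset.mem_insert, Finset.mem_singleton]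
      omega
    calc ∑ t ∈ (Finset.Icc (-(N:ℤ)) N).filter (fun t => t.natAbs = u), ((N / (t.natAbs ⊔ 1) : ℕ) : ℝ)
        = ∑ t ∈ (Finset.Icc (-(N:ℤ)) N).filter (fun t => t.natAbs = u), ((N / (u ⊔ 1) : ℕ) : ℝ) := by
          refine Finset.sum_congr rfl fun t ht => ?_
          simp only [Finset.mem_filter] at ht
          rw [ht.2]
      _ = ((Finset.Icc (-(N:ℤ)) N).filter (fun t => t.natAbs = u)).card * ((N / (u ⊔ 1) : ℕ) : ℝ) := by
          rw [Finset.sum_const, nsmul_eq_mul]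
      _ ≤ 2 * ((N / (u ⊔ 1) : ℕ) : ℝ) := by
          refine mul_le_mul_of_nonneg_right ?_ (by positivity)
          have := Finset.card_le_card hsub
          have h2 : ({(u:ℤ), -(u:ℤ)} : Finset ℤ).card ≤ 2 :=
            (Finset.card_insert_le _ _).trans (by simp)
          exact_mod_cast this.trans h2
  refine h2.trans ?_
  have hsplit : Finset.Icc 0 N = insert 0 (Finset.Icc 1 N) := by
    exact (Finset.insert_Icc_add_one_left_eq_Icc (Nat.zero_le N)).symm
  rw [hsplit, Finset.sum_insert (by simp)]
  have h0 : 2 * ((N / (0 ⊔ 1) : ℕ) : ℝ) = 2 * N := by norm_num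
  rw [h0]
  have hterm : ∀ u ∈ Finset.Icc 1 N, 2 * ((N / (u ⊔ 1) : ℕ) : ℝ) ≤ 2 * ((N:ℝ) / u) := by
    intro u hu
    simp only [Finset.mem_Icc] at hu
    rw [max_eq_left hu.1]
    exact mul_le_mul_of_nonneg_left (Nat.cast_div_le) (by norm_num)
  have hsum : ∑ u ∈ Finset.Icc 1 N, 2 * ((N / (u ⊔ 1) : ℕ) : ℝ)
      ≤ 2 * ((N:ℝ) * (1 + Real.log N)) := by
    refine (Finset.sum_le_sum hterm).trans ?_
    rw [← Finset.mul_sum]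
    refine mul_le_mul_of_nonneg_left ?_ (by norm_num)
    have : ∑ u ∈ Finset.Icc 1 N, (N:ℝ) / u = (N:ℝ) * ∑ u ∈ Finset.Icc 1 N, ((u:ℝ))⁻¹ := by
      rw [Finset.mul_sum]; exact Finset.sum_congr rfl fun u _ => div_eq_mul_inv _ _
    rw [this]
    refine mul_le_mul_of_nonneg_left ?_ (by positivity)
    have hh : ((harmonic N : ℚ) : ℝ) = ∑ u ∈ Finset.Icc 1 N, ((u:ℝ))⁻¹ := by
      rw [harmonic_eq_sum_Icc]; push_cast; ring_nf
    rw [← hh]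
    exact harmonic_le_one_add_log N
  have hN' : (1:ℝ) ≤ N := Nat.one_le_cast.mpr hN
  nlinarith [hsum, hN', hlogN]

lemma card_hyperCross_le : ∀ d N : ℕ, 1 ≤ N →
    ((hyperCross (d+1) N).card : ℝ) ≤ 4^(d+1) * N * (1 + Real.log N)^d := by
  intro d
  induction d with
  | zero =>
    intro N hN
    have h1 : (hyperCross 1 N).card ≤ (Fintype.piFinset fun _ : Fin 1 =>
        Finset.Icc (-(N : ℤ)) (N : ℤ)).card := Finset.card_filter_le _ _
    have h2 : (Fintype.piFinset fun _ : Fin 1 => Finset.Icc (-(N : ℤ)) (N : ℤ)).card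
        = 2*N+1 := by
      rw [Fintype.card_piFinset]
      simp [Int.card_Icc]
      omega
    have hN' : (1:ℝ) ≤ N := Nat.one_le_cast.mpr hN
    have : ((hyperCross 1 N).card : ℝ) ≤ 2*N+1 := by exact_mod_cast h1.trans_eq h2
    refine this.trans ?_
    simp only [pow_zero, mul_one]
    norm_num
    nlinarith
  | succ e ih =>
    intro N hN
    have hstep := card_step (e+1) N hN
    have hcast : ((hyperCross (e+2) N).card : ℝ)
        ≤ ∑ t ∈ Finset.Icc (-(N:ℤ)) (N:ℤ), ((hyperCross (e+1) (N / (t.natAbs ⊔ 1))).card : ℝ) := by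
      exact_mod_cast hstep
    have hlogN : 0 ≤ Real.log N := Real.log_natCast_nonneg N
    have hterm : ∀ t ∈ Finset.Icc (-(N:ℤ)) (N:ℤ),
        ((hyperCross (e+1) (N / (t.natAbs ⊔ 1))).card : ℝ)
          ≤ 4^(e+1) * ((N / (t.natAbs ⊔ 1) : ℕ) : ℝ) * (1 + Real.log N)^e := by
      intro t ht
      set M := N / (t.natAbs ⊔ 1) with hM
      have htN : t.natAbs ⊔ 1 ≤ N := by
        simp only [Finset.mem_Icc] at ht
        omega
      have hM1 : 1 ≤ M := (Nat.one_le_div_iff (by omega)).2 htN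
      refine (ih M hM1).trans ?_
      have hMN : (M:ℝ) ≤ N := Nat.cast_le.2 (Nat.div_le_self _ _)
      have hlog : (1 + Real.log M)^e ≤ (1 + Real.log N)^e := by
        refine pow_le_pow_left₀ (by
          have : 0 ≤ Real.log M := Real.log_natCast_nonneg M
          linarith) (by
          have : Real.log M ≤ Real.log N := Real.log_le_log (by exact_mod_cast hM1) (Nat.cast_le.2 (Nat.div_le_self _ _))
          linarith) e
      calc (4:ℝ)^(e+1) * M * (1 + Real.log M)^e
          ≤ 4^(e+1) * M * (1 + Real.log N)^e := by
            refine mul_le_mul_of_nonneg_left hlog (by positivity)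
        _ = 4^(e+1) * ((M:ℕ):ℝ) * (1 + Real.log N)^e := rfl
    refine hcast.trans ((Finset.sum_le_sum hterm).trans ?_)
    have hfac : ∑ t ∈ Finset.Icc (-(N:ℤ)) (N:ℤ),
        (4:ℝ)^(e+1) * ((N / (t.natAbs ⊔ 1) : ℕ) : ℝ) * (1 + Real.log N)^e
        = 4^(e+1) * (1 + Real.log N)^e *
          ∑ t ∈ Finset.Icc (-(N:ℤ)) (N:ℤ), ((N / (t.natAbs ⊔ 1) : ℕ) : ℝ) := by
      rw [Finset.mul_sum]
      exact Finset.sum_congr rfl fun t _ => by ring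
    rw [hfac]
    have h4 := sum_div_le N hN
    have hpos : (0:ℝ) ≤ 4^(e+1) * (1 + Real.log N)^e := by positivity
    calc (4:ℝ)^(e+1) * (1 + Real.log N)^e *
          ∑ t ∈ Finset.Icc (-(N:ℤ)) (N:ℤ), ((N / (t.natAbs ⊔ 1) : ℕ) : ℝ)
        ≤ 4^(e+1) * (1 + Real.log N)^e * (4 * N * (1 + Real.log N)) :=
          mul_le_mul_of_nonneg_left h4 hpos
      _ = 4^(e+1+1) * N * (1 + Real.log N)^(e+1) := by ring

lemma exists_good_h (d N p : ℕ) (pp : p.Prime) (hNp : N < p)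
    (hcard : (hyperCross d N).card < p) :
    ∃ h : Fin d → ℤ, ∀ k ∈ hyperCross d N, ((p:ℤ) ∣ ∑ j, k j * h j ↔ k = 0) := by
  haveI : Fact p.Prime := ⟨pp⟩
  classical
  set S := (hyperCross d N).erase 0 with hS
  set Bad : (Fin d → ℤ) → Finset (Fin d → ZMod p) := fun k =>
    Finset.univ.filter (fun g => ∑ j, (k j : ZMod p) * g j = 0) with hBad
  have hBadCard : ∀ k ∈ S, (Bad k).card ≤ p ^ (d-1) := by
    intro k hk
    simp only [hS, Finset.mem_erase] at hk
    obtain ⟨hk0, hkmem⟩ := hk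
    obtain ⟨j0, hj0⟩ := Function.ne_iff.1 hk0
    have hj0' : k j0 ≠ 0 := by simpa using hj0
    have hkj0 : (k j0 : ZMod p) ≠ 0 := by
      intro hc
      rw [ZMod.intCast_zmod_eq_zero_iff_dvd] at hc
      simp only [hyperCross, Finset.mem_filter, Fintype.mem_piFinset, Finset.mem_Icc] at hkmem
      have h1 := (hkmem.1 j0).1
      have h2 := (hkmem.1 j0).2
      have hle : (p:ℤ) ≤ |k j0| := Int.le_of_dvd (abs_pos.2 hj0') ((dvd_abs _ _).2 hc)
      have : |k j0| ≤ N := abs_le.2 ⟨h1, h2⟩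
      omega
    have hinj : Set.InjOn (fun g : Fin d → ZMod p => fun j : {j : Fin d // j ≠ j0} => g j)
        (Bad k : Set (Fin d → ZMod p)) := by
      intro g1 hg1 g2 hg2 heq
      simp only [hBad, Finset.coe_filter, Set.mem_setOf_eq] at hg1 hg2
      have hoff : ∀ j : Fin d, j ≠ j0 → g1 j = g2 j := fun j hj => congrFun heq ⟨j, hj⟩
      have hsum : ∀ g : Fin d → ZMod p, ∑ j, (k j : ZMod p) * g j
          = (k j0 : ZMod p) * g j0 + ∑ j ∈ Finset.univ.erase j0, (k j : ZMod p) * g j :=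
        fun g => (Finset.add_sum_erase _ _ (Finset.mem_univ j0)).symm
      have herase : ∑ j ∈ Finset.univ.erase j0, (k j : ZMod p) * g1 j
          = ∑ j ∈ Finset.univ.erase j0, (k j : ZMod p) * g2 j :=
        Finset.sum_congr rfl fun j hj => by rw [hoff j (Finset.mem_erase.1 hj).1]
      have hj0eq : (k j0 : ZMod p) * g1 j0 = (k j0 : ZMod p) * g2 j0 := by
        have e1 := hsum g1
        have e2 := hsum g2
        rw [hg1.2] at e1
        rw [hg2.2] at e2
        rw [herase] at e1
        linear_combination e2 - e1
      have := mul_left_cancel₀ hkj0 hj0eq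
      funext j
      by_cases hj : j = j0
      · rw [hj]; exact this
      · exact hoff j hj
    have hcard2 : (Bad k).card ≤ Fintype.card ({j : Fin d // j ≠ j0} → ZMod p) := by
      classical
      have := Finset.card_le_card_of_injOn
        (f := fun g : Fin d → ZMod p => fun j : {j : Fin d // j ≠ j0} => g j)
        (t := Finset.univ) (fun g _ => Finset.mem_univ _) hinj
      simpa using this
    refine hcard2.trans_eq ?_
    rw [Fintype.card_fun, ZMod.card]
    congr 1
    have : Fintype.card {j : Fin d // ¬ j = j0} = Fintype.card (Fin d) - Fintype.card {j : Fin d // j = j0} :=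
      Fintype.card_subtype_compl _
    simpa [Fintype.card_subtype_eq] using this
  have hcardU : (S.biUnion Bad).card < Fintype.card (Fin d → ZMod p) := by
    have h1 : (S.biUnion Bad).card ≤ ∑ k ∈ S, (Bad k).card := Finset.card_biUnion_le
    have h2 : ∑ k ∈ S, (Bad k).card ≤ S.card * p ^ (d-1) := by
      calc ∑ k ∈ S, (Bad k).card ≤ ∑ _k ∈ S, p ^ (d-1) := Finset.sum_le_sum hBadCard
        _ = S.card * p ^ (d-1) := by rw [Finset.sum_const, smul_eq_mul]
    have hScard : S.card < p := lt_of_le_of_lt Finset.card_erase_le hcard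
    have h3 : S.card * p ^ (d-1) < p ^ d := by
      rcases d with _ | e
      · have hS0 : S.card = 0 := by
          rw [Finset.card_eq_zero]
          refine Finset.eq_empty_of_forall_notMem fun x hx => ?_
          have : x = 0 := funext fun j => j.elim0
          exact (Finset.mem_erase.1 hx).1 this
        simpa [hS0] using Nat.one_pos
      · have : S.card * p ^ e < p * p ^ e :=
          (Nat.mul_lt_mul_right (pow_pos pp.pos e)).2 hScard
        simpa [pow_succ'] using this
    rw [Fintype.card_fun, ZMod.card, Fintype.card_fin]
    omega
  obtain ⟨g, hg⟩ : ∃ g : Fin d → ZMod p, g ∉ S.biUnion Bad := by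
    by_contra hcon
    push_neg at hcon
    have : (Finset.univ : Finset (Fin d → ZMod p)) ⊆ S.biUnion Bad := fun g _ => hcon g
    have := Finset.card_le_card this
    rw [Finset.card_univ] at this
    omega
  refine ⟨fun j => ((g j).val : ℤ), ?_⟩
  intro k hk
  constructor
  · intro hdvd
    by_contra hk0
    have hkS : k ∈ S := Finset.mem_erase.2 ⟨hk0, hk⟩
    have hgBad : g ∈ Bad k := by
      simp only [hBad, Finset.mem_filter, Finset.mem_univ, true_and]
      have : ((∑ j, k j * ((g j).val : ℤ) : ℤ) : ZMod p) = 0 :=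
        (ZMod.intCast_zmod_eq_zero_iff_dvd _ _).2 hdvd
      rw [← this]
      push_cast
      refine Finset.sum_congr rfl fun j _ => ?_
      congr 1
      exact (ZMod.natCast_rightInverse (g j)).symm
    exact hg (Finset.mem_biUnion.2 ⟨k, hkS, hgBad⟩)
  · intro hk0
    subst hk0
    simp



lemma card_hyperCross_gt (d N : ℕ) (hd : 0 < d) (hN : 1 ≤ N) : N < (hyperCross d N).card := by
  classical
  set j0 : Fin d := ⟨0, hd⟩
  have hle : (Finset.Icc (0:ℤ) N).card ≤ (hyperCross d N).card := by
    refine Finset.card_le_card_of_injOn (fun t => fun j => if j = j0 then t else 0) ?_ ?_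
    · intro t ht
      simp only [Finset.mem_coe, Finset.mem_Icc] at ht
      simp only [Finset.mem_coe, hyperCross, Finset.mem_filter, Fintype.mem_piFinset, Finset.mem_Icc]
      constructor
      · intro j
        by_cases hj : j = j0 <;> simp [hj] <;> omega
      · have : ∏ j, max |if j = j0 then t else 0| 1 = max |t| 1 := by
          rw [Finset.prod_eq_single j0 (fun b _ hb => by simp [hb]) (by simp)]
          simp
        rw [this, abs_of_nonneg ht.1]
        have : (1:ℤ) ≤ N := by exact_mod_cast hN
        omega
    · intro t1 h1 t2 h2 heq
      have := congrFun heq j0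
      simpa using this
  have hcardIcc : (Finset.Icc (0:ℤ) (N:ℤ)).card = N + 1 := by
    rw [Int.card_Icc]
    simp
  omega

lemma expFun_continuous {d : ℕ} (k : Fin d → ℤ) : Continuous (expFun k) := by
  unfold expFun
  exact Complex.continuous_exp.comp (continuous_const.mul
    (continuous_finset_sum _ fun j _ => continuous_const.mul
      (Complex.continuous_ofReal.comp (continuous_apply j))))

/-- for every `N` there is a Korobov cubature formula with
`m ≤ C(d)·N·(log N)^{d-1}` nodes that is exact on `𝒯(Γ(N,d))` (Remark CR1). -/
theorem stmt18 (d : ℕ) (hd : 0 < d) :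
    ∃ C : ℝ, 0 < C ∧ ∀ N : ℕ, 1 ≤ N →
      ∃ (m : ℕ) (h : Fin d → ℤ), 0 < m ∧
        (N = 1 → (m : ℝ) ≤ C) ∧
        (1 < N → (m : ℝ) ≤ C * N * Real.log N ^ (d - 1)) ∧
        ∀ f ∈ trigSpace (hyperCross d N),
          (m : ℂ)⁻¹ * ∑ ν ∈ Finset.Icc 1 m, f (korNode m h ν) =
            (((2 * Real.pi) ^ d : ℝ) : ℂ)⁻¹ * ∫ x in cube d, f x := by
  classical
  refine ⟨2 * 12^d, by positivity, ?_⟩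
  intro N hN
  -- choose the prime
  have hcard0 : (hyperCross d N).card ≠ 0 := by
    have := card_hyperCross_gt d N hd hN
    omega
  obtain ⟨p, pp, hp1, hp2⟩ := Nat.exists_prime_lt_and_le_two_mul (hyperCross d N).card hcard0
  have hNp : N < p := (card_hyperCross_gt d N hd hN).trans hp1
  obtain ⟨h, hgood⟩ := exists_good_h d N p pp hNp hp1
  refine ⟨p, h, pp.pos, ?_, ?_, ?_⟩
  · -- N = 1
    intro hN1
    subst hN1
    have hb : ((hyperCross d 1).card : ℝ) ≤ 4^d * 1 * (1 + Real.log 1)^(d-1) := by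
      obtain ⟨e, rfl⟩ : ∃ e, d = e + 1 := ⟨d - 1, by omega⟩
      simpa using card_hyperCross_le e 1 le_rfl
    have h2 : (p:ℝ) ≤ 2 * (hyperCross d 1).card := by exact_mod_cast hp2
    have h4 : (4:ℝ)^d ≤ 12^d := pow_le_pow_left₀ (by norm_num) (by norm_num) d
    simp only [Real.log_one] at hb
    norm_num at hb
    nlinarith
  · -- N ≥ 2
    intro hN2
    have hb : ((hyperCross d N).card : ℝ) ≤ 4^d * N * (1 + Real.log N)^(d-1) := by
      obtain ⟨e, rfl⟩ : ∃ e, d = e + 1 := ⟨d - 1, by omega⟩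
      simpa using card_hyperCross_le e N hN
    have h2 : (p:ℝ) ≤ 2 * (hyperCross d N).card := by exact_mod_cast hp2
    have hlog2 : (1/2 : ℝ) ≤ Real.log N := by
      have : Real.log 2 ≤ Real.log N := by
        apply Real.log_le_log (by norm_num)
        have h2N : (2:ℕ) ≤ N := hN2
        exact_mod_cast h2N
      have := Real.log_two_gt_d9
      linarith
    have hlogpow : (1 + Real.log N)^(d-1) ≤ 3^(d-1) * Real.log N^(d-1) := by
      rw [← mul_pow]
      refine pow_le_pow_left₀ (by linarith) (by linarith) _
    have hNpos : (0:ℝ) ≤ N := Nat.cast_nonneg N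
    have hchain : ((hyperCross d N).card : ℝ) ≤ 4^d * 3^(d-1) * N * Real.log N^(d-1) := by
      calc ((hyperCross d N).card : ℝ) ≤ 4^d * N * (1 + Real.log N)^(d-1) := hb
        _ ≤ 4^d * N * (3^(d-1) * Real.log N^(d-1)) := by
            refine mul_le_mul_of_nonneg_left hlogpow (by positivity)
        _ = 4^d * 3^(d-1) * N * Real.log N^(d-1) := by ring
    have hconst : (4:ℝ)^d * 3^(d-1) ≤ 12^d := by
      calc (4:ℝ)^d * 3^(d-1) ≤ 4^d * 3^d := by
            refine mul_le_mul_of_nonneg_left (pow_le_pow_right₀ (by norm_num) (by omega)) (by positivity)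
        _ = 12^d := by rw [← mul_pow]; norm_num
    have hlp : (0:ℝ) ≤ Real.log N ^ (d-1) := by positivity
    calc (p:ℝ) ≤ 2 * (hyperCross d N).card := h2
      _ ≤ 2 * (4^d * 3^(d-1) * N * Real.log N^(d-1)) := by linarith
      _ ≤ 2 * 12^d * N * Real.log N^(d-1) := by
          have h5 : (4:ℝ)^d * 3^(d-1) * (N * Real.log N^(d-1)) ≤ 12^d * (N * Real.log N^(d-1)) :=
            mul_le_mul_of_nonneg_right hconst (by positivity)
          nlinarith [h5]
  · -- exactness
    set m := p with hm
    have hm0 : (0:ℕ) < m := pp.pos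
    have hmC : (m:ℂ) ≠ 0 := Nat.cast_ne_zero.mpr hm0.ne'
    have h2piC : (((2 * Real.pi)^d : ℝ) : ℂ) ≠ 0 := by
      simp only [ne_eq, Complex.ofReal_eq_zero]
      positivity
    have key : ∀ k ∈ hyperCross d N,
        (m : ℂ)⁻¹ * ∑ ν ∈ Finset.Icc 1 m, expFun k (korNode m h ν) =
          (((2 * Real.pi) ^ d : ℝ) : ℂ)⁻¹ * ∫ x in cube d, expFun k x := by
      intro k hk
      have hLHS : ∑ ν ∈ Finset.Icc 1 m, expFun k (korNode m h ν)
          = if (m:ℤ) ∣ ∑ j, k j * h j then (m:ℂ) else 0 := by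
        simp_rw [expFun_korNode m h k]
        exact sum_exp_geom m hm0 _
      rw [hLHS, integral_expFun]
      by_cases hk0 : k = 0
      · rw [if_pos ((hgood k hk).2 hk0), if_pos hk0, inv_mul_cancel₀ hmC, inv_mul_cancel₀ h2piC]
      · rw [if_neg (fun hdvd => hk0 ((hgood k hk).1 hdvd)), if_neg hk0, mul_zero, mul_zero]
    intro f hf
    have main : IntegrableOn f (cube d) volume ∧
        ((m : ℂ)⁻¹ * ∑ ν ∈ Finset.Icc 1 m, f (korNode m h ν) =
          (((2 * Real.pi) ^ d : ℝ) : ℂ)⁻¹ * ∫ x in cube d, f x) := by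
      induction hf using Submodule.span_induction with
      | mem g hg =>
        obtain ⟨k, hk, rfl⟩ := hg
        exact ⟨(expFun_continuous k).continuousOn.integrableOn_compact isCompact_Icc,
          key k hk⟩
      | zero => exact ⟨integrable_zero _ _ _, by simp⟩
      | add x y hx hy ihx ihy =>
        refine ⟨ihx.1.add ihy.1, ?_⟩
        simp only [Pi.add_apply]
        rw [Finset.sum_add_distrib, mul_add, ihx.2, ihy.2,
          integral_add ihx.1 ihy.1, mul_add]
      | smul c x hx ihx =>
        refine ⟨ihx.1.smul c, ?_⟩
        simp only [Pi.smul_apply, smul_eq_mul]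
        rw [← Finset.mul_sum, MeasureTheory.integral_const_mul, mul_left_comm, ihx.2, mul_left_comm]
    exact main.2
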